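/- arXiv:2309.00286 — 2 statements merged into one kernel-verified Lean document; each statement's English description precedes it below -/
import Mathlib

section
/- Let k ≥ 1 and suppose for each j = 1, ..., k we are given rationals U_j ≥ 0 and V_j > 0. Consider the system of equations in unknowns A_1, ..., A_k and S = A_1 + ... + A_k: U_j A_j = (U_j + V_j)(1 + A_j - S) and V_j A_j = (U_j + V_j)(S - 1) for all j. Then any solution satisfies S > 1, A_j > 0 for all j, and 1 + A_j - S ≥ 0 for all j. -/
/-- Sparse-case system: if `U_j ≥ 0`, `V_j > 0`, `S = Σ A_j`, and for all `j`
`U_j A_j = (U_j + V_j)(1 + A_j - S)` and `V_j A_j = (U_j + V_j)(S - 1)`, then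
`S > 1`, every `A_j > 0`, and `1 + A_j - S ≥ 0`. -/
theorem sparse_system_solution (k : ℕ) (hk : 1 ≤ k)
    (U V A : Fin k → ℚ)
    (hU : ∀ j, 0 ≤ U j) (hV : ∀ j, 0 < V j)
    (h1 : ∀ j, U j * A j = (U j + V j) * (1 + A j - (∑ i, A i)))
    (h2 : ∀ j, V j * A j = (U j + V j) * ((∑ i, A i) - 1)) :
    1 < (∑ i, A i) ∧ (∀ j, 0 < A j) ∧ (∀ j, 0 ≤ 1 + A j - (∑ i, A i)) := by
  set S := ∑ i, A i with hS
  have hUV : ∀ j, 0 < U j + V j := fun j => add_pos_of_nonneg_of_pos (hU j) (hV j)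
  have hS1 : 1 < S := by
    by_contra hle
    push_neg at hle
    -- each A_j ≤ 0
    have hA0 : ∀ j, A j ≤ 0 := by
      intro j
      have := h2 j
      nlinarith [hV j, hUV j]
    have hS0 : S ≤ 0 := Finset.sum_nonpos (fun j _ => hA0 j)
    -- A_j ≤ S - 1
    have hAle : ∀ j, A j ≤ S - 1 := by
      intro j
      have := h2 j
      nlinarith [hV j, hU j, hUV j]
    have hsum : S ≤ ∑ _i : Fin k, (S - 1) := Finset.sum_le_sum (fun j _ => hAle j)
    simp only [Finset.sum_const, Finset.card_univ, Fintype.card_fin, nsmul_eq_mul] at hsum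
    have hk1 : (1 : ℚ) ≤ (k : ℚ) := by exact_mod_cast hk
    nlinarith
  have hApos : ∀ j, 0 < A j := by
    intro j
    have := h2 j
    nlinarith [hV j, hUV j]
  refine ⟨hS1, hApos, fun j => ?_⟩
  have := h1 j
  have h3 : 0 ≤ U j * A j := mul_nonneg (hU j) (hApos j).le
  nlinarith [hUV j]
end

section
/- Let k ≥ 1, and for j = 1, ..., k let U_j ≥ 0 and V_j > 0 be rationals satisfying V_j A_j = (U_j + V_j)(S - 1) where S = A_1 + ... + A_k. Suppose S ≤ 1. If S = 1 then all A_j = 0, contradicting S = 1 ≠ 0; if S < 1 then all A_j < 0, yet Σ_j (U_j/(U_j+V_j)) A_j = (k-1)(1-S) + 1 > 1 > 0, a contradiction. Hence no solution with S ≤ 1 exists, i.e. necessarily S > 1. -/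
/-- Contradiction argument: with `U_j ≥ 0`, `V_j > 0`, `S = Σ A_j`, and the system
`U_j A_j = (U_j + V_j)(1 + A_j - S)`, `V_j A_j = (U_j + V_j)(S - 1)`, no solution
with `S ≤ 1` exists; necessarily `S > 1`. -/
theorem sparse_system_S_gt_one (k : ℕ) (hk : 1 ≤ k)
    (U V A : Fin k → ℚ)
    (hU : ∀ j, 0 ≤ U j) (hV : ∀ j, 0 < V j)
    (h1 : ∀ j, U j * A j = (U j + V j) * (1 + A j - (∑ i, A i)))
    (h2 : ∀ j, V j * A j = (U j + V j) * ((∑ i, A i) - 1)) :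
    1 < (∑ i, A i) := by
  haveI : NeZero k := ⟨by omega⟩
  by_contra hle
  push_neg at hle
  set S := ∑ i, A i with hS
  rcases eq_or_lt_of_le hle with heq | hlt
  · -- S = 1 : then each A j = 0, so S = 0, contradiction
    have hA : ∀ j, A j = 0 := by
      intro j
      have h := h2 j
      rw [← heq] at h
      simp only [sub_self, mul_zero] at h
      have := hV j
      nlinarith
    have : S = 0 := Finset.sum_eq_zero (fun j _ => hA j)
    linarith
  · -- S < 1 : then each A j < 0
    have hAneg : ∀ j, A j < 0 := by
      intro j
      have h := h2 j
      have hUV : 0 < U j + V j := by have := hU j; have := hV j; linarith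
      nlinarith [hV j, mul_pos hUV (by linarith : (0:ℚ) < 1 - S)]
    have hSneg : S < 0 := by
      rw [hS]
      exact Finset.sum_neg (fun j _ => hAneg j) Finset.univ_nonempty
    have hle2 : ∀ j, A j ≤ S - 1 := by
      intro j
      have h := h1 j
      have hUV : 0 < U j + V j := by have := hU j; have := hV j; linarith
      have hUA : U j * A j ≤ 0 := mul_nonpos_of_nonneg_of_nonpos (hU j) (hAneg j).le
      nlinarith
    have hsum : S ≤ (k : ℚ) * (S - 1) := by
      calc S = ∑ i, A i := hS
        _ ≤ ∑ _i : Fin k, (S - 1) := Finset.sum_le_sum (fun j _ => hle2 j)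
        _ = (k : ℚ) * (S - 1) := by simp [Finset.sum_const, mul_comm]; ring
    have hk1 : (1 : ℚ) ≤ (k : ℚ) := by exact_mod_cast hk
    nlinarith
end
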